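/- Let G be a graph and I a maximum critical independent set of G. For every maximum matching M of the induced subgraph G[L(G)], core(G) ∩ L(G) = M(N(I) \ corona(G)) ∪ D(G[L(G)]), where M(X) denotes the set of matching partners of vertices in X, and D(H) = {v : some maximum matching of H misses v}. -/

import Mathlib

open Finset

variable {V : Type*} [Fintype V] [DecidableEq V] (G : SimpleGraph V) [DecidableRel G.Adj]

/-- `N(S)`: the set of vertices adjacent to some vertex of `S`. -/
def nbhd (S : Finset V) : Finset V := S.biUnion (fun v => G.neighborFinset v)

/-- `S` is an independent set of `G`. -/
def Indep (S : Finset V) : Prop := ∀ u ∈ S, ∀ v ∈ S, ¬ G.Adj u v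

/-- The difference `d_G(S) = |S| - |N(S)|`. -/
def diffI (S : Finset V) : ℤ := (S.card : ℤ) - ((nbhd G S).card : ℤ)

/-- `S` is a maximum independent set of `G`. -/
def IsMaxIndep (S : Finset V) : Prop :=
  Indep G S ∧ ∀ T : Finset V, Indep G T → T.card ≤ S.card

/-- `I` is a critical independent set of `G`. -/
def IsCritIndep (I : Finset V) : Prop :=
  Indep G I ∧ ∀ J : Finset V, Indep G J → diffI G J ≤ diffI G I

/-- `I` is a maximum critical independent set of `G`. -/
def IsMaxCritIndep (I : Finset V) : Prop :=
  IsCritIndep G I ∧ ∀ J : Finset V, IsCritIndep G J → J.card ≤ I.card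

/-- `core(G)`: intersection of all maximum independent sets. -/
def core : Set V := {v | ∀ S : Finset V, IsMaxIndep G S → v ∈ S}

/-- `corona(G)`: union of all maximum independent sets. -/
def corona : Set V := {v | ∃ S : Finset V, IsMaxIndep G S ∧ v ∈ S}

/-- `nucleus(G)`: intersection of all maximum critical independent sets. -/
def nucleus : Set V := {v | ∀ S : Finset V, IsMaxCritIndep G S → v ∈ S}

/-- `diadem(G)`: union of all maximum critical independent sets. -/
def diadem : Set V := {v | ∃ S : Finset V, IsMaxCritIndep G S ∧ v ∈ S}

/-- `ker(G)`: intersection of all critical independent sets. -/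
def kerS : Set V := {v | ∀ S : Finset V, IsCritIndep G S → v ∈ S}

/-- A matching of `G`, given as an involution of the vertex set:
unmatched vertices are fixed points, matched vertices are sent to their partner. -/
def IsMatching (M : V → V) : Prop :=
  Function.Involutive M ∧ ∀ v, M v ≠ v → G.Adj v (M v)

/-- Twice the number of edges of the matching `M`, i.e. the number of matched vertices. -/
def matchSize (M : V → V) : ℕ := (univ.filter fun v => M v ≠ v).card

/-- `M` is a maximum matching of `G`. -/
def IsMaxMatching (M : V → V) : Prop :=
  IsMatching G M ∧ ∀ M' : V → V, IsMatching G M' → matchSize M' ≤ matchSize M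

/-- `M` is a matching of the induced subgraph `G[L]`. -/
def IsMatchingOn (L : Finset V) (M : V → V) : Prop :=
  IsMatching G M ∧ ∀ v, M v ≠ v → v ∈ L

/-- `M` is a maximum matching of the induced subgraph `G[L]`. -/
def IsMaxMatchingOn (L : Finset V) (M : V → V) : Prop :=
  IsMatchingOn G L M ∧ ∀ M' : V → V, IsMatchingOn G L M' → matchSize M' ≤ matchSize M

/-- `S` is a maximum independent set of the induced subgraph `G[L]`. -/
def IsMaxIndepOn (L : Finset V) (S : Finset V) : Prop :=
  S ⊆ L ∧ Indep G S ∧ ∀ T : Finset V, T ⊆ L → Indep G T → T.card ≤ S.card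

/-- `core` of the induced subgraph `G[L]`. -/
def coreOn (L : Finset V) : Set V := {v | ∀ S : Finset V, IsMaxIndepOn G L S → v ∈ S}

/-- `D(G[L])`: vertices of `L` missed by some maximum matching of `G[L]`. -/
def Dset (L : Finset V) : Set V := {v | v ∈ L ∧ ∃ M : V → V, IsMaxMatchingOn G L M ∧ M v = v}

/-- The Larson boundary `∂_L(G)` of the set `L`. -/
def boundaryL (L : Finset V) : Set V := {v | v ∈ L ∧ ∃ w, w ∉ L ∧ G.Adj v w}

/-- The critical difference `d(G)`. -/
noncomputable def critDiff : ℤ := sSup {d : ℤ | ∃ X : Finset V, diffI G X = d}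

/-- The difference of `S` computed in the induced subgraph `G[L]`. -/
def diffOn (L : Finset V) (S : Finset V) : ℤ := (S.card : ℤ) - ((nbhd G S ∩ L).card : ℤ)

/-- The critical difference of the induced subgraph `G[L]`. -/
noncomputable def critDiffOn (L : Finset V) : ℤ := sSup {d : ℤ | ∃ X : Finset V, X ⊆ L ∧ diffOn G L X = d}

/-- `G` is a König–Egerváry graph: `α(G) + μ(G) = |V(G)|`. -/
def KonigEgervary : Prop :=
  ∃ (S : Finset V) (M : V → V), IsMaxIndep G S ∧ IsMaxMatching G M ∧
    2 * S.card + matchSize M = 2 * Fintype.card V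
-- ===== auxiliary lemmas =====

lemma mem_nbhd {S : Finset V} {v : V} : v ∈ nbhd G S ↔ ∃ u ∈ S, G.Adj u v := by
  simp [nbhd]

variable {G}

/-- members of an independent set are not in its neighborhood -/
lemma indep_not_mem_nbhd {I : Finset V} (hI : Indep G I) {v : V} (hv : v ∈ I) :
    v ∉ nbhd G I := by
  intro h
  obtain ⟨u, hu, hadj⟩ := (mem_nbhd G).1 h
  exact hI u hu v hv hadj

/-- Hall-type inequality for subsets of `N(I)` when `I` is critical. -/
lemma hall_ineq {I : Finset V} (hI : IsCritIndep G I) {B : Finset V}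
    (hB : B ⊆ nbhd G I) : B.card ≤ (nbhd G B ∩ I).card := by
  set J := I \ nbhd G B with hJ
  have hJindep : Indep G J := fun u hu w hw => hI.1 u (sdiff_subset hu) w (sdiff_subset hw)
  have h1 : nbhd G J ⊆ nbhd G I \ B := by
    intro w hw
    obtain ⟨u, hu, hadj⟩ := (mem_nbhd G).1 hw
    rw [mem_sdiff] at hu
    rw [mem_sdiff]
    refine ⟨(mem_nbhd G).2 ⟨u, hu.1, hadj⟩, fun hwB => hu.2 ?_⟩
    exact (mem_nbhd G).2 ⟨w, hwB, hadj.symm⟩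
  have h2 : (nbhd G J).card + B.card ≤ (nbhd G I).card := by
    have := card_le_card h1
    have := card_sdiff_add_card_eq_card hB
    omega
  have h3 : J.card + (I ∩ nbhd G B).card = I.card := card_sdiff_add_card_inter I (nbhd G B)
  have h4 : (I ∩ nbhd G B).card = (nbhd G B ∩ I).card := by rw [inter_comm]
  have hd := hI.2 J hJindep
  simp only [diffI] at hd
  omega

/-- From criticality, a matching of `N(I)` into `I` exists, as an involution,
    saturating all of `N(I)`. -/
lemma exists_matching_A {I : Finset V} (hI : IsCritIndep G I) :
    ∃ M0 : V → V, IsMatchingOn G (I ∪ nbhd G I) M0 ∧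
      matchSize M0 = 2 * (nbhd G I).card := by
  classical
  set A := nbhd G I with hA
  -- Hall's theorem
  have hall : ∀ s : Finset {x // x ∈ A},
      s.card ≤ (s.biUnion (fun u => G.neighborFinset u.val ∩ I)).card := by
    intro s
    have hBsub : s.image Subtype.val ⊆ A := by
      intro x hx
      obtain ⟨u, _, rfl⟩ := Finset.mem_image.1 hx
      exact u.2
    have hbi : s.biUnion (fun u => G.neighborFinset u.val ∩ I)
        = nbhd G (s.image Subtype.val) ∩ I := by
      ext w
      simp only [Finset.mem_biUnion, Finset.mem_inter, SimpleGraph.mem_neighborFinset,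
        mem_nbhd, Finset.mem_image]
      constructor
      · rintro ⟨u, hu, hadj, hwI⟩
        exact ⟨⟨u.val, ⟨u, hu, rfl⟩, hadj⟩, hwI⟩
      · rintro ⟨⟨x, ⟨u, hu, rfl⟩, hadj⟩, hwI⟩
        exact ⟨u, hu, hadj, hwI⟩
    have := hall_ineq hI hBsub
    rw [hbi]
    calc s.card = (s.image Subtype.val).card :=
          (card_image_of_injective s Subtype.val_injective).symm
      _ ≤ _ := this
  obtain ⟨f, hfinj, hf⟩ := (Finset.all_card_le_biUnion_card_iff_exists_injective _).1 hall
  have hfI : ∀ u, f u ∈ I := fun u => (Finset.mem_inter.1 (hf u)).2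
  have hfadj : ∀ u : {x // x ∈ A}, G.Adj u.val (f u) := fun u =>
    (SimpleGraph.mem_neighborFinset _ _ _).1 (Finset.mem_inter.1 (hf u)).1
  have hIA : ∀ x, x ∈ I → x ∉ A := fun x hx => indep_not_mem_nbhd hI.1 hx
  have hfnA : ∀ u, f u ∉ A := fun u => hIA _ (hfI u)
  set M0 : V → V := fun v =>
    if h : v ∈ A then f ⟨v, h⟩
    else if h2 : ∃ u : {x // x ∈ A}, f u = v then (h2.choose : {x // x ∈ A}).val
    else v with hM0
  have hM0A : ∀ (v) (h : v ∈ A), M0 v = f ⟨v, h⟩ := by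
    intro v h; simp only [hM0, dif_pos h]
  have hM0f : ∀ u : {x // x ∈ A}, M0 (f u) = u.val := by
    intro u
    have h1 : f u ∉ A := hfnA u
    have h2 : ∃ w : {x // x ∈ A}, f w = f u := ⟨u, rfl⟩
    simp only [hM0, dif_neg h1, dif_pos h2]
    have := h2.choose_spec
    have : h2.choose = u := hfinj this
    rw [this]
  have hM0other : ∀ v, v ∉ A → (¬ ∃ u : {x // x ∈ A}, f u = v) → M0 v = v := by
    intro v h1 h2; simp only [hM0, dif_neg h1, dif_neg h2]
  have hinv : Function.Involutive M0 := by
    intro v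
    by_cases h : v ∈ A
    · rw [hM0A v h, hM0f ⟨v, h⟩]
    · by_cases h2 : ∃ u : {x // x ∈ A}, f u = v
      · have heq : M0 v = (h2.choose : {x // x ∈ A}).val := by
          simp only [hM0, dif_neg h, dif_pos h2]
        rw [heq, hM0A _ (h2.choose).2]
        have : (⟨(h2.choose : {x // x ∈ A}).val, (h2.choose).2⟩ : {x // x ∈ A}) = h2.choose :=
          Subtype.ext rfl
        rw [this, h2.choose_spec]
      · rw [hM0other v h h2, hM0other v h h2]
  have hne : ∀ v, M0 v ≠ v ↔ (v ∈ A ∨ ∃ u : {x // x ∈ A}, f u = v) := by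
    intro v
    constructor
    · intro hv
      by_contra hcon
      push_neg at hcon
      exact hv (hM0other v hcon.1 (not_exists.2 hcon.2))
    · rintro (h | ⟨u, rfl⟩)
      · rw [hM0A v h]
        intro heq
        exact hfnA ⟨v, h⟩ (by rw [heq]; exact h)
      · rw [hM0f u]
        intro heq
        exact hfnA u (by rw [← heq]; exact u.2)
  refine ⟨M0, ⟨⟨hinv, ?_⟩, ?_⟩, ?_⟩
  · -- adjacency
    intro v hv
    rcases (hne v).1 hv with h | ⟨u, rfl⟩
    · rw [hM0A v h]; exact hfadj ⟨v, h⟩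
    · rw [hM0f u]; exact (hfadj u).symm
  · -- support in L
    intro v hv
    rcases (hne v).1 hv with h | ⟨u, rfl⟩
    · exact Finset.mem_union_right _ h
    · exact Finset.mem_union_left _ (hfI u)
  · -- matchSize
    have hset : (univ.filter fun v => M0 v ≠ v)
        = A ∪ (univ : Finset {x // x ∈ A}).image (fun u => f u) := by
      ext v
      simp only [Finset.mem_filter, Finset.mem_union, Finset.mem_image, Finset.mem_univ,
        true_and]
      rw [hne v]
    have hdisj : Disjoint A ((univ : Finset {x // x ∈ A}).image (fun u => f u)) := by
      rw [Finset.disjoint_right]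
      rintro v hv
      obtain ⟨u, _, rfl⟩ := Finset.mem_image.1 hv
      exact hfnA u
    rw [matchSize, hset, Finset.card_union_of_disjoint hdisj,
      card_image_of_injective _ hfinj]
    rw [Finset.card_univ, Fintype.card_coe]
    ring

/-- Any matching on `L = I ∪ N(I)` has size at most `2|N(I)|`. -/
lemma matchSize_le_of_indep {I : Finset V} (hIi : Indep G I) {M' : V → V}
    (hM' : IsMatchingOn G (I ∪ nbhd G I) M') :
    matchSize M' ≤ 2 * (nbhd G I).card := by
  classical
  set A := nbhd G I with hA
  set F := univ.filter (fun v => M' v ≠ v) with hF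
  have hmemF : ∀ v, v ∈ F ↔ M' v ≠ v := by intro v; simp [hF]
  have hFL : ∀ v ∈ F, v ∈ I ∪ A := fun v hv => hM'.2 v ((hmemF v).1 hv)
  have hMF : ∀ v ∈ F, M' v ∈ F := by
    intro v hv
    rw [hmemF] at hv ⊢
    intro h
    exact hv (by rw [← hM'.1.1 v, h, h])
  have key : ∀ v ∈ F, v ∉ A → M' v ∈ A := by
    intro v hv hvA
    have hvI : v ∈ I := (Finset.mem_union.1 (hFL v hv)).resolve_right hvA
    have hMvL : M' v ∈ I ∪ A := hFL _ (hMF v hv)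
    rcases Finset.mem_union.1 hMvL with h | h
    · exact absurd (hM'.1.2 v ((hmemF v).1 hv)) (hIi v hvI _ h)
    · exact h
  have hinj : Set.InjOn M' ↑(F \ A) := by
    intro a _ b _ hab
    have := congrArg M' hab
    rwa [hM'.1.1, hM'.1.1] at this
  have h1 : (F \ A).card ≤ A.card := by
    apply Finset.card_le_card_of_injOn M' _ hinj
    intro v hv
    rw [Finset.mem_coe, Finset.mem_sdiff] at hv
    exact key v hv.1 hv.2
  have h2 : (F \ A).card + (F ∩ A).card = F.card := card_sdiff_add_card_inter F A
  have h3 : (F ∩ A).card ≤ A.card := card_le_card inter_subset_right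
  have hms : matchSize M' = F.card := rfl
  omega

/-- A maximum matching of `G[L]` has size exactly `2|N(I)|` and matches every
    vertex of `N(I)` to a vertex of `I`. -/
lemma maxMatching_props {I : Finset V} (hI : IsCritIndep G I) {M : V → V}
    (hM : IsMaxMatchingOn G (I ∪ nbhd G I) M) :
    matchSize M = 2 * (nbhd G I).card ∧ ∀ u ∈ nbhd G I, M u ≠ u ∧ M u ∈ I := by
  classical
  set A := nbhd G I with hA
  obtain ⟨M0, hM0, hM0size⟩ := exists_matching_A hI
  have hsize : matchSize M = 2 * A.card :=
    le_antisymm (matchSize_le_of_indep hI.1 hM.1) (hM0size ▸ hM.2 M0 hM0)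
  set F := univ.filter (fun v => M v ≠ v) with hF
  have hmemF : ∀ v, v ∈ F ↔ M v ≠ v := by intro v; simp [hF]
  have hFL : ∀ v ∈ F, v ∈ I ∪ A := fun v hv => hM.1.2 v ((hmemF v).1 hv)
  have hMF : ∀ v ∈ F, M v ∈ F := by
    intro v hv
    rw [hmemF] at hv ⊢
    intro h
    exact hv (by rw [← hM.1.1.1 v, h, h])
  have key : ∀ v ∈ F, v ∉ A → M v ∈ A := by
    intro v hv hvA
    have hvI : v ∈ I := (Finset.mem_union.1 (hFL v hv)).resolve_right hvA
    rcases Finset.mem_union.1 (hFL _ (hMF v hv)) with h | h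
    · exact absurd (hM.1.1.2 v ((hmemF v).1 hv)) (hI.1 v hvI _ h)
    · exact h
  have hinj : Set.InjOn M ↑(F \ A) := by
    intro a _ b _ hab
    have := congrArg M hab
    rwa [hM.1.1.1, hM.1.1.1] at this
  have h1 : (F \ A).card ≤ A.card := by
    apply Finset.card_le_card_of_injOn M _ hinj
    intro v hv
    rw [Finset.mem_coe, Finset.mem_sdiff] at hv
    exact key v hv.1 hv.2
  have h2 : (F \ A).card + (F ∩ A).card = F.card := card_sdiff_add_card_inter F A
  have h3 : (F ∩ A).card ≤ A.card := card_le_card inter_subset_right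
  have hFcard : F.card = 2 * A.card := hsize
  have hFA : F ∩ A = A := by
    apply Finset.eq_of_subset_of_card_le inter_subset_right
    omega
  have hAF : A ⊆ F := by
    intro u hu
    have : u ∈ F ∩ A := by rw [hFA]; exact hu
    exact (Finset.mem_inter.1 this).1
  -- surjectivity of M : F \ A → A
  have hsurj : ∀ u ∈ A, ∃ w, ∃ (_ : w ∈ F \ A), u = M w := by
    apply Finset.surj_on_of_inj_on_of_card_le (fun w _ => M w)
    · intro w hw
      rw [Finset.mem_sdiff] at hw
      exact key w hw.1 hw.2
    · intro a b ha hb hab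
      exact hinj ha hb hab
    · omega
  refine ⟨hsize, fun u hu => ?_⟩
  obtain ⟨w, hw, hwu⟩ := hsurj u hu
  rw [Finset.mem_sdiff] at hw
  have hMu : M u = w := by rw [hwu, hM.1.1.1]
  refine ⟨(hmemF u).1 (hAF hu), ?_⟩
  rw [hMu]
  exact (Finset.mem_union.1 (hFL w hw.1)).resolve_right hw.2

/-- Any independent set inside `L = I ∪ N(I)` has at most `|I|` elements. -/
lemma indep_on_card_le {I : Finset V} (hI : IsCritIndep G I) {T : Finset V}
    (hTL : T ⊆ I ∪ nbhd G I) (hTi : Indep G T) : T.card ≤ I.card := by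
  classical
  set A := nbhd G I with hA
  have hBsub : T ∩ A ⊆ A := inter_subset_right
  have h1 : (T ∩ A).card ≤ (nbhd G (T ∩ A) ∩ I).card := hall_ineq hI hBsub
  have h2 : nbhd G (T ∩ A) ∩ I ⊆ I \ T := by
    intro w hw
    rw [Finset.mem_inter] at hw
    obtain ⟨t, ht, hadj⟩ := (mem_nbhd G).1 hw.1
    rw [Finset.mem_sdiff]
    refine ⟨hw.2, fun hwT => ?_⟩
    exact hTi t (Finset.mem_inter.1 ht).1 w hwT hadj
  have h3 : (T ∩ A).card ≤ (I \ T).card := h1.trans (card_le_card h2)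
  have h4 : (I \ T).card + (I ∩ T).card = I.card := card_sdiff_add_card_inter I T
  have h5 : (T \ I).card + (T ∩ I).card = T.card := card_sdiff_add_card_inter T I
  have h6 : T \ I ⊆ T ∩ A := by
    intro x hx
    rw [Finset.mem_sdiff] at hx
    rw [Finset.mem_inter]
    exact ⟨hx.1, (Finset.mem_union.1 (hTL hx.1)).resolve_left hx.2⟩
  have h7 : (T \ I).card ≤ (T ∩ A).card := card_le_card h6
  have h8 : (I ∩ T).card = (T ∩ I).card := by rw [inter_comm]
  omega

/-- There is a maximum independent set `S*` of `G` with `S* ∩ L = I`;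
    moreover `|S ∩ L| = |I|` for every maximum independent set `S`. -/
lemma ext_lemma {I : Finset V} (hI : IsCritIndep G I) :
    ∃ Sstar : Finset V, IsMaxIndep G Sstar ∧ Sstar ∩ (I ∪ nbhd G I) = I ∧
      ∀ S : Finset V, IsMaxIndep G S → (S ∩ (I ∪ nbhd G I)).card = I.card := by
  classical
  set L := I ∪ nbhd G I with hL
  set C := univ.powerset.filter (fun T => Indep G T ∧ T ∩ L = ∅) with hC
  have hCne : C.Nonempty := ⟨∅, by simp [hC, Indep]⟩
  obtain ⟨Tstar, hTC, hTmax⟩ := Finset.exists_max_image C Finset.card hCne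
  rw [hC, Finset.mem_filter] at hTC
  have hTind : Indep G Tstar := hTC.2.1
  have hTdisj : Tstar ∩ L = ∅ := hTC.2.2
  have hTnL : ∀ x ∈ Tstar, x ∉ L := by
    intro x hx hxL
    have : x ∈ Tstar ∩ L := Finset.mem_inter.2 ⟨hx, hxL⟩
    simp [hTdisj] at this
  have hTmax' : ∀ T : Finset V, Indep G T → (∀ x ∈ T, x ∉ L) → T.card ≤ Tstar.card := by
    intro T hTi hTd
    apply hTmax
    rw [hC, Finset.mem_filter]
    refine ⟨Finset.mem_powerset.2 (subset_univ T), hTi, ?_⟩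
    rw [Finset.eq_empty_iff_forall_notMem]
    intro x hx
    rw [Finset.mem_inter] at hx
    exact hTd x hx.1 hx.2
  set Sstar := I ∪ Tstar with hS
  have hIL : I ⊆ L := Finset.subset_union_left
  have hSind : Indep G Sstar := by
    intro u hu v hv hadj
    rcases Finset.mem_union.1 hu with hu1 | hu1 <;> rcases Finset.mem_union.1 hv with hv1 | hv1
    · exact hI.1 u hu1 v hv1 hadj
    · exact hTnL v hv1 (Finset.mem_union_right _ ((mem_nbhd G).2 ⟨u, hu1, hadj⟩))
    · exact hTnL u hu1 (Finset.mem_union_right _ ((mem_nbhd G).2 ⟨v, hv1, hadj.symm⟩))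
    · exact hTind u hu1 v hv1 hadj
  have hSdisj : Disjoint I Tstar := by
    rw [Finset.disjoint_right]
    intro x hx
    exact fun hxI => hTnL x hx (hIL hxI)
  have hScard : Sstar.card = I.card + Tstar.card := Finset.card_union_of_disjoint hSdisj
  have hbound : ∀ S : Finset V, Indep G S → S.card ≤ I.card + Tstar.card := by
    intro S hSi
    have e1 : (S ∩ L).card + (S \ L).card = S.card := by
      rw [add_comm]; exact card_sdiff_add_card_inter S L
    have e2 : (S ∩ L).card ≤ I.card :=
      indep_on_card_le hI inter_subset_right (fun u hu v hv =>
        hSi u (Finset.mem_inter.1 hu).1 v (Finset.mem_inter.1 hv).1)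
    have e3 : (S \ L).card ≤ Tstar.card := by
      apply hTmax' _ (fun u hu v hv => hSi u (sdiff_subset hu) v (sdiff_subset hv))
      intro x hx
      exact (Finset.mem_sdiff.1 hx).2
    omega
  have hSmax : IsMaxIndep G Sstar := ⟨hSind, fun T hT => hScard ▸ hbound T hT⟩
  refine ⟨Sstar, hSmax, ?_, ?_⟩
  · -- Sstar ∩ L = I
    apply Finset.Subset.antisymm
    · intro x hx
      rw [Finset.mem_inter] at hx
      rcases Finset.mem_union.1 hx.1 with h | h
      · exact h
      · exact absurd hx.2 (hTnL x h)
    · intro x hx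
      exact Finset.mem_inter.2 ⟨Finset.mem_union_left _ hx, hIL hx⟩
  · intro S hSmax'
    have h1 : (S ∩ L).card ≤ I.card :=
      indep_on_card_le hI inter_subset_right (fun u hu v hv =>
        hSmax'.1 u (Finset.mem_inter.1 hu).1 v (Finset.mem_inter.1 hv).1)
    have h2 : Sstar.card ≤ S.card := hSmax'.2 Sstar hSind
    have h3 : S.card ≤ Sstar.card := hSmax.2 S hSmax'.1
    have e1 : (S ∩ L).card + (S \ L).card = S.card := by
      rw [add_comm]; exact card_sdiff_add_card_inter S L
    have e3 : (S \ L).card ≤ Tstar.card := by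
      apply hTmax' _ (fun u hu v hv => hSmax'.1 u (sdiff_subset hu) v (sdiff_subset hv))
      intro x hx
      exact (Finset.mem_sdiff.1 hx).2
    omega

/-- Key counting lemma: for any maximum matching `M'` of `G[L]` and any maximum
    independent set `S` of `G`: `S` contains every `M'`-exposed vertex of `L`, and
    for each `u ∈ N(I)` one endpoint of its matching edge lies in `S`. -/
lemma key_count {I : Finset V} (hI : IsCritIndep G I) {M' : V → V}
    (hM' : IsMaxMatchingOn G (I ∪ nbhd G I) M') {S : Finset V} (hS : IsMaxIndep G S) :
    (∀ v ∈ I ∪ nbhd G I, M' v = v → v ∈ S) ∧ (∀ u ∈ nbhd G I, u ∈ S ∨ M' u ∈ S) := by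
  classical
  set A := nbhd G I with hA
  set L := I ∪ A with hL
  obtain ⟨hsize, hmatchA⟩ := maxMatching_props hI hM'
  set F := L.filter (fun v => M' v ≠ v) with hF
  have hmemF : ∀ v, v ∈ F ↔ v ∈ L ∧ M' v ≠ v := by intro v; simp [hF]
  have hFuniv : univ.filter (fun v => M' v ≠ v) = F := by
    ext v
    simp only [Finset.mem_filter, Finset.mem_univ, true_and, hmemF]
    exact ⟨fun h => ⟨hM'.1.2 v h, h⟩, fun h => h.2⟩
  have hFcard : F.card = 2 * A.card := by
    rw [← hFuniv]; exact hsize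
  have hFL : F ⊆ L := Finset.filter_subset _ _
  have hIA : Disjoint I A := by
    rw [Finset.disjoint_left]
    exact fun x hx => indep_not_mem_nbhd hI.1 hx
  have hLcard : L.card = I.card + A.card := Finset.card_union_of_disjoint hIA
  have hSL : (S ∩ L).card = I.card := by
    obtain ⟨_, _, _, h⟩ := ext_lemma hI
    exact h S hS
  have hMF : ∀ v ∈ F, M' v ∈ F := by
    intro v hv
    rw [hmemF] at hv ⊢
    have hne : M' (M' v) ≠ M' v := by rw [hM'.1.1.1]; exact fun h => hv.2 h.symm
    exact ⟨hM'.1.2 _ hne, hne⟩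
  have key : ∀ v ∈ F, v ∉ A → M' v ∈ A := by
    intro v hv hvA
    have hvI : v ∈ I := by
      rcases Finset.mem_union.1 ((hmemF v).1 hv).1 with h | h
      · exact h
      · exact absurd h hvA
    rcases Finset.mem_union.1 ((hmemF _).1 (hMF v hv)).1 with h | h
    · exact absurd (hM'.1.1.2 v ((hmemF v).1 hv).2) (hI.1 v hvI _ h)
    · exact h
  set a : V → V := fun v => if v ∈ A then v else M' v with ha
  have hmaps : ∀ v ∈ S ∩ F, a v ∈ A := by
    intro v hv
    rw [Finset.mem_inter] at hv
    by_cases h : v ∈ A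
    · simp [ha, h]
    · simp only [ha, if_neg h]
      exact key v hv.2 h
  have hinj : Set.InjOn a ↑(S ∩ F) := by
    intro x hx y hy hxy
    simp only [Finset.coe_inter, Set.mem_inter_iff, Finset.mem_coe,
      Finset.mem_inter] at hx hy
    have hxS : x ∈ S := by have := hx; exact this.1
    have hyS : y ∈ S := by have := hy; exact this.1
    have hxF : x ∈ F := by have := hx; exact this.2
    have hyF : y ∈ F := by have := hy; exact this.2
    by_cases h1 : x ∈ A <;> by_cases h2 : y ∈ A
    · simpa [ha, h1, h2] using hxy
    · simp only [ha, if_pos h1, if_neg h2] at hxy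
      exfalso
      have hadj : G.Adj y (M' y) := hM'.1.1.2 y ((hmemF y).1 hyF).2
      rw [← hxy] at hadj
      exact hS.1 y hyS x hxS hadj
    · simp only [ha, if_neg h1, if_pos h2] at hxy
      exfalso
      have hadj : G.Adj x (M' x) := hM'.1.1.2 x ((hmemF x).1 hxF).2
      rw [hxy] at hadj
      exact hS.1 x hxS y hyS hadj
    · simp only [ha, if_neg h1, if_neg h2] at hxy
      have := congrArg M' hxy
      rwa [hM'.1.1.1, hM'.1.1.1] at this
  have hSFle : (S ∩ F).card ≤ A.card := Finset.card_le_card_of_injOn a hmaps hinj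
  have hsplit : ((S ∩ L) \ F).card + ((S ∩ L) ∩ F).card = (S ∩ L).card :=
    card_sdiff_add_card_inter _ _
  have hSLF : (S ∩ L) ∩ F = S ∩ F := by
    ext x
    simp only [Finset.mem_inter]
    exact ⟨fun h => ⟨h.1.1, h.2⟩, fun h => ⟨⟨h.1, hFL h.2⟩, h.2⟩⟩
  have hmissedsub : (S ∩ L) \ F ⊆ L \ F := by
    intro x hx
    rw [Finset.mem_sdiff] at hx ⊢
    exact ⟨(Finset.mem_inter.1 hx.1).2, hx.2⟩
  have hmissedcard : (L \ F).card + F.card = L.card := card_sdiff_add_card_eq_card hFL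
  have hFle : F.card ≤ L.card := card_le_card hFL
  -- missed ⊆ S ∩ L
  have hmissedS : L \ F = (S ∩ L) \ F := by
    apply (Finset.eq_of_subset_of_card_le hmissedsub ?_).symm
    rw [hSLF] at hsplit
    omega
  have hSFcard : (S ∩ F).card = A.card := by
    rw [hSLF] at hsplit
    have := card_le_card hmissedsub
    omega
  constructor
  · intro v hvL hvfix
    have hv : v ∈ L \ F := by
      rw [Finset.mem_sdiff, hmemF]
      exact ⟨hvL, fun h => h.2 hvfix⟩
    rw [hmissedS] at hv
    exact (Finset.mem_inter.1 (Finset.mem_sdiff.1 hv).1).1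
  · intro u hu
    have hsurj : ∀ b ∈ A, ∃ w, ∃ (_ : w ∈ S ∩ F), b = a w := by
      apply Finset.surj_on_of_inj_on_of_card_le (fun w _ => a w) (fun w hw => hmaps w hw)
        (fun x y hx hy => hinj hx hy)
      omega
    obtain ⟨w, hw, hwu⟩ := hsurj u hu
    have hwS : w ∈ S := (Finset.mem_inter.1 hw).1
    by_cases h : w ∈ A
    · left
      rw [hwu]
      simpa [ha, h] using hwS
    · right
      have : u = M' w := by rw [hwu]; simp [ha, h]
      rw [this, hM'.1.1.1]
      exact hwS

variable (G)

theorem stmt10 (I : Finset V) (hI : IsMaxCritIndep G I) (M : V → V)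
    (hM : IsMaxMatchingOn G (I ∪ nbhd G I) M) :
    core G ∩ ↑(I ∪ nbhd G I) =
      M '' (↑(nbhd G I) \ corona G) ∪ Dset G (I ∪ nbhd G I) := by
  classical
  have hIc : IsCritIndep G I := hI.1
  ext v
  constructor
  · rintro ⟨hvcore, hvL⟩
    have hvcore' : ∀ S : Finset V, IsMaxIndep G S → v ∈ S := hvcore
    have hvL' : v ∈ I ∪ nbhd G I := Finset.mem_coe.1 hvL
    obtain ⟨Sstar, hSstar, hSstarL, _⟩ := ext_lemma hIc
    have hvI : v ∈ I := by
      have h1 : v ∈ Sstar := hvcore' Sstar hSstar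
      have h2 : v ∈ Sstar ∩ (I ∪ nbhd G I) := Finset.mem_inter.2 ⟨h1, hvL'⟩
      rw [hSstarL] at h2
      exact h2
    by_cases hfix : M v = v
    · exact Or.inr ⟨hvL', M, hM, hfix⟩
    · left
      have hMvF : M (M v) ≠ M v := by rw [hM.1.1.1]; exact fun h => hfix h.symm
      have hMvL : M v ∈ I ∪ nbhd G I := hM.1.2 _ hMvF
      have hMvA : M v ∈ nbhd G I := by
        rcases Finset.mem_union.1 hMvL with h | h
        · exact absurd (hM.1.1.2 v hfix) (hIc.1 v hvI _ h)
        · exact h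
      refine ⟨M v, ⟨Finset.mem_coe.2 hMvA, ?_⟩, hM.1.1.1 v⟩
      rintro ⟨S, hSmax, hMvS⟩
      exact hSmax.1 v (hvcore' S hSmax) _ hMvS (hM.1.1.2 v hfix)
  · rintro (⟨u, ⟨huA, hucor⟩, rfl⟩ | hD)
    · have huA' : u ∈ nbhd G I := Finset.mem_coe.1 huA
      obtain ⟨hsize, hprops⟩ := maxMatching_props hIc hM
      obtain ⟨hune, huI⟩ := hprops u huA'
      refine ⟨?_, Finset.mem_coe.2 (Finset.mem_union_left _ huI)⟩
      intro S hSmax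
      rcases (key_count hIc hM hSmax).2 u huA' with h | h
      · exact absurd ⟨S, hSmax, h⟩ hucor
      · exact h
    · obtain ⟨hvL, M', hM', hfix⟩ := hD
      refine ⟨?_, Finset.mem_coe.2 hvL⟩
      intro S hSmax
      exact (key_count hIc hM' hSmax).1 v hvL hfix
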